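/- The transition matrix Q of the Hata map with p = 1/2 on the state space S = {−,+}×ℕ is irreducible and recurrent: for all s,t ∈ S there exists n ≥ 1 with q^{(n)}(s,t) > 0 (q^{(n)} the n-step transition probability), and Σ_{n≥1} q^{(n)}(s,s) = ∞ for every s ∈ S. -/

import Mathlib

open scoped ENNReal Classical

noncomputable section

/-- The state space of the Markov chain for the Hata map: `(false,k)` codes `I_k^-`
and `(true,k)` codes `I_k^+`. -/
abbrev S : Type := Bool × ℕ

/-- The transition matrix `Q` of the Hata map with `p = 1/2`:
`q((±,k),(±,k±1)) = 1/2` (same sign, neighbouring index) and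
`q((∓,0),(±,j)) = 2^{-(j+2)}`; all other entries vanish. -/
def qH : S → S → ℝ≥0∞ := fun s t =>
  if s.1 = t.1 ∧ (t.2 = s.2 + 1 ∨ s.2 = t.2 + 1) then 1/2
  else if s.1 ≠ t.1 ∧ s.2 = 0 then (1/2)^(t.2+2)
  else 0

/-- The `n`-step transition probabilities of a transition matrix `p`. -/
def nstep {ι : Type*} (p : ι → ι → ℝ≥0∞) : ℕ → ι → ι → ℝ≥0∞
  | 0 => fun i j => if i = j then 1 else 0
  | n+1 => fun i j => ∑' k : ι, nstep p n i k * p k j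

lemma nstep_zero {ι : Type*} (p : ι → ι → ℝ≥0∞) (s t : ι) :
    nstep p 0 s t = if s = t then 1 else 0 := rfl
lemma nstep_succ {ι : Type*} (p : ι → ι → ℝ≥0∞) (n : ℕ) (s t : ι) :
    nstep p (n+1) s t = ∑' k : ι, nstep p n s k * p k t := rfl
lemma qH_up (b : Bool) (k : ℕ) : qH (b,k) (b,k+1) = 1/2 := by simp [qH]
lemma qH_down (b : Bool) (k : ℕ) : qH (b,k+1) (b,k) = 1/2 := by simp [qH]
lemma qH_cross (b c : Bool) (j : ℕ) (h : b ≠ c) : qH (b,0) (c,j) = (1/2)^(j+2) := by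
  simp [qH, h]

lemma le_nstep_succ {ι : Type*} (p : ι → ι → ℝ≥0∞) (n : ℕ) (s u t : ι) :
    nstep p n s u * p u t ≤ nstep p (n+1) s t := by
  rw [nstep_succ]; exact ENNReal.le_tsum u

lemma nstep_pos_step {n : ℕ} {s u t : S} (h1 : 0 < nstep qH n s u) (h2 : 0 < qH u t) :
    0 < nstep qH (n+1) s t :=
  lt_of_lt_of_le (ENNReal.mul_pos h1.ne' h2.ne') (le_nstep_succ qH n s u t)

lemma nstep_self_pos {ι : Type*} (p : ι → ι → ℝ≥0∞) (s : ι) : 0 < nstep p 0 s s := by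
  simp [nstep_zero]

lemma climb (b : Bool) (k m : ℕ) : 0 < nstep qH m (b, k) (b, k + m) := by
  induction m with
  | zero => simpa using nstep_self_pos qH (b,k)
  | succ m ih =>
    have : 0 < qH (b, k+m) (b, k+m+1) := by rw [qH_up]; norm_num
    exact nstep_pos_step ih this

lemma descend (b : Bool) (m : ℕ) : ∀ k, 0 < nstep qH m (b, k + m) (b, k) := by
  induction m with
  | zero => intro k; simpa using nstep_self_pos qH (b,k)
  | succ m ih =>
    intro k
    have h1 : 0 < nstep qH m (b, k + (m+1)) (b, k+1) := by
      have := ih (k+1); rwa [show k+1+m = k+(m+1) by omega] at this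
    have h2 : 0 < qH (b, k+1) (b, k) := by rw [qH_down]; norm_num
    exact nstep_pos_step h1 h2

lemma irred : ∀ s t : S, ∃ n : ℕ, 1 ≤ n ∧ 0 < nstep qH n s t := by
  rintro ⟨b, k⟩ ⟨c, l⟩
  by_cases hbc : b = c
  · subst hbc
    rcases lt_trichotomy k l with h | h | h
    · exact ⟨l - k, by omega, by
        have := climb b k (l - k)
        rwa [show k + (l - k) = l by omega] at this⟩
    · subst h
      refine ⟨2, by norm_num, ?_⟩
      have h1 : 0 < nstep qH 1 (b,k) (b,k+1) := by
        have := climb b k 1; simpa using this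
      have h2 : 0 < qH (b,k+1) (b,k) := by rw [qH_down]; norm_num
      exact nstep_pos_step h1 h2
    · exact ⟨k - l, by omega, by
        have := descend b (k - l) l
        rwa [show l + (k - l) = k by omega] at this⟩
  · refine ⟨k + 1, by omega, ?_⟩
    have h1 : 0 < nstep qH k (b, k) (b, 0) := by
      have := descend b k 0; simpa using this
    have h2 : 0 < qH (b,0) (c,l) := by
      rw [qH_cross b c l hbc]
      exact ENNReal.pow_pos (by norm_num) _
    exact nstep_pos_step h1 h2

def s0 : S := (false, 0)
def G : S → ℝ≥0∞ := fun t => ∑' n, nstep qH n t s0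

lemma nstep_one' {ι : Type*} (p : ι → ι → ℝ≥0∞) (s t : ι) :
    nstep p 1 s t = p s t := by
  rw [nstep_succ, tsum_eq_single s]
  · simp [nstep_zero]
  · intro u hu; simp [nstep_zero, Ne.symm hu]

lemma nstep_add' {ι : Type*} (p : ι → ι → ℝ≥0∞) (m n : ℕ) (s t : ι) :
    nstep p (m + n) s t = ∑' u : ι, nstep p m s u * nstep p n u t := by
  induction n generalizing t with
  | zero =>
    rw [Nat.add_zero, tsum_eq_single t]
    · simp [nstep_zero]
    · intro u hu; simp [nstep_zero, hu]
  | succ n ih =>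
    rw [show m + (n+1) = (m+n)+1 from rfl, nstep_succ]
    calc ∑' k : ι, nstep p (m+n) s k * p k t
        = ∑' k : ι, (∑' u : ι, nstep p m s u * nstep p n u k) * p k t :=
          tsum_congr fun k => by rw [ih]
      _ = ∑' k : ι, ∑' u : ι, nstep p m s u * nstep p n u k * p k t :=
          tsum_congr fun k => by rw [ENNReal.tsum_mul_right]
      _ = ∑' u : ι, ∑' k : ι, nstep p m s u * (nstep p n u k * p k t) := by
          rw [ENNReal.tsum_comm]
          exact tsum_congr fun u => tsum_congr fun k => by ring
      _ = ∑' u : ι, nstep p m s u * nstep p (n+1) u t :=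
          tsum_congr fun u => by rw [ENNReal.tsum_mul_left, nstep_succ]

lemma G_eq (t : S) : G t = (if t = s0 then 1 else 0) + ∑' u : S, qH t u * G u := by
  have h0 : G t = nstep qH 0 t s0 + ∑' n, nstep qH (n+1) t s0 :=
    tsum_eq_zero_add' ENNReal.summable
  have hstep : ∀ n, nstep qH (n+1) t s0 = ∑' u : S, qH t u * nstep qH n u s0 := by
    intro n
    rw [show n+1 = 1+n by omega, nstep_add']
    exact tsum_congr fun u => by rw [nstep_one']
  have hmain : ∑' n, nstep qH (n+1) t s0 = ∑' u : S, qH t u * G u := by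
    calc ∑' n, nstep qH (n+1) t s0
        = ∑' n, ∑' u : S, qH t u * nstep qH n u s0 := tsum_congr hstep
      _ = ∑' u : S, ∑' n, qH t u * nstep qH n u s0 := ENNReal.tsum_comm
      _ = ∑' u : S, qH t u * G u := tsum_congr fun u => ENNReal.tsum_mul_left
  rw [h0, nstep_zero, hmain]
  congr 1
  by_cases ht : t = s0 <;> simp [ht]

lemma G_ne_top (h : (∑' n, nstep qH (n+1) s0 s0) ≠ ⊤) (t : S) : G t ≠ ⊤ := by
  have hG0 : G s0 ≠ ⊤ := by
    have h1 : G s0 = 1 + ∑' n, nstep qH (n+1) s0 s0 := by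
      have := tsum_eq_zero_add' (f := fun n => nstep qH n s0 s0) ENNReal.summable
      simpa [nstep_zero, G] using this
    rw [h1]
    exact ENNReal.add_ne_top.mpr ⟨ENNReal.one_ne_top, h⟩
  obtain ⟨m, _, hpos⟩ := irred s0 t
  have key : nstep qH m s0 t * G t ≤ G s0 := by
    calc nstep qH m s0 t * G t
        = ∑' n, nstep qH m s0 t * nstep qH n t s0 := ENNReal.tsum_mul_left.symm
      _ ≤ ∑' n, nstep qH (m+n) s0 s0 :=
          Summable.tsum_le_tsum (fun n => by rw [nstep_add']; exact ENNReal.le_tsum t)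
            ENNReal.summable ENNReal.summable
      _ ≤ ∑' n, nstep qH n s0 s0 :=
          ENNReal.tsum_comp_le_tsum_of_injective (add_right_injective m) _
      _ = G s0 := rfl
  intro htop
  rw [htop, ENNReal.mul_top hpos.ne'] at key
  exact hG0 (top_le_iff.mp key)

lemma tsum_S (f : S → ℝ≥0∞) :
    ∑' u : S, f u = (∑' n, f (false, n)) + (∑' n, f (true, n)) := by
  have h : ∑' u : S, f u = ∑' b : Bool, ∑' n : ℕ, f (b, n) := by
    rw [← ENNReal.tsum_prod]
  rw [h, tsum_bool]

lemma qH_int_vanish (b c : Bool) (k n : ℕ) (h : ¬(c = b ∧ (n = k+2 ∨ n = k))) :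
    qH (b,k+1) (c,n) = 0 := by
  simp only [qH]
  rw [if_neg, if_neg]
  · rintro ⟨-, h2⟩
    omega
  · rintro ⟨h1, h2⟩
    exact h ⟨h1.symm, by omega⟩

lemma G_interior (b : Bool) (k : ℕ) :
    G (b,k+1) = 1/2 * G (b,k) + 1/2 * G (b,k+2) := by
  have hne : ((b, k+1) : S) ≠ s0 := by
    simp [s0]
  have hsum : ∀ c : Bool, (∑' n, qH (b,k+1) (c,n) * G (c,n)) =
      if c = b then 1/2 * G (b,k) + 1/2 * G (b,k+2) else 0 := by
    intro c
    by_cases hc : c = b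
    · subst hc
      rw [if_pos rfl, tsum_eq_sum (s := {k, k+2})]
      · rw [Finset.sum_pair (by omega)]
        rw [qH_down, show (k+2 : ℕ) = (k+1)+1 from rfl, qH_up]
      · intro n hn
        rw [qH_int_vanish c c k n (by
          simp only [Finset.mem_insert, Finset.mem_singleton] at hn
          tauto), zero_mul]
    · rw [if_neg hc]
      have : ∀ n : ℕ, qH (b,k+1) (c,n) * G (c,n) = 0 := by
        intro n
        rw [qH_int_vanish b c k n (by tauto), zero_mul]
      rw [tsum_congr this, tsum_zero]
  rw [G_eq, if_neg hne, zero_add, tsum_S]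
  rw [hsum false, hsum true]
  cases b <;> simp

lemma qH_gate_same_vanish (b : Bool) (n : ℕ) (h : n ≠ 1) : qH (b,0) (b,n) = 0 := by
  simp only [qH]
  rw [if_neg, if_neg]
  · rintro ⟨h1, -⟩
    exact h1 rfl
  · rintro ⟨-, h2⟩
    omega

lemma G_gate (b : Bool) :
    G (b,0) = (if b = false then 1 else 0) +
      (1/2 * G (b,1) + ∑' j, (1/2)^(j+2) * G (!b, j)) := by
  have hsum : ∀ c : Bool, (∑' n, qH (b,0) (c,n) * G (c,n)) =
      if c = b then 1/2 * G (b,1) else ∑' j, (1/2)^(j+2) * G (c, j) := by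
    intro c
    by_cases hc : c = b
    · subst hc
      rw [if_pos rfl, tsum_eq_single 1]
      · have hq := qH_up c 0; simp only [zero_add] at hq; rw [hq]
      · intro n hn
        rw [qH_gate_same_vanish c n hn, zero_mul]
    · rw [if_neg hc]
      exact tsum_congr fun j => by rw [qH_cross b c j (Ne.symm hc)]
  have hδ : (if ((b,0) : S) = s0 then (1:ℝ≥0∞) else 0) = if b = false then 1 else 0 := by
    cases b <;> simp [s0]
  rw [G_eq, tsum_S, hsum false, hsum true, hδ]
  cases b <;> simp <;> ring

def g : Bool → ℕ → ℝ := fun b k => (G (b,k)).toReal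
def dd : Bool → ℝ := fun b => g b 1 - g b 0

lemma g_nonneg (b : Bool) (k : ℕ) : 0 ≤ g b k := ENNReal.toReal_nonneg

lemma half_ne_top : (1/2 : ℝ≥0∞) ≠ ⊤ := by norm_num

lemma g_rec (hfin : ∀ t : S, G t ≠ ⊤) (b : Bool) (k : ℕ) :
    g b (k+1) = 1/2 * g b k + 1/2 * g b (k+2) := by
  have h := congrArg ENNReal.toReal (G_interior b k)
  rw [ENNReal.toReal_add (ENNReal.mul_ne_top half_ne_top (hfin _))
      (ENNReal.mul_ne_top half_ne_top (hfin _)), ENNReal.toReal_mul, ENNReal.toReal_mul] at h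
  have h2 : (1/2 : ℝ≥0∞).toReal = 1/2 := by norm_num
  rw [h2] at h
  exact h

lemma g_slope (hfin : ∀ t : S, G t ≠ ⊤) (b : Bool) : ∀ k, g b (k+1) - g b k = dd b := by
  intro k
  induction k with
  | zero => simp [dd]
  | succ k ih =>
    have := g_rec hfin b k
    linarith

lemma g_lin (hfin : ∀ t : S, G t ≠ ⊤) (b : Bool) (k : ℕ) : g b k = g b 0 + k * dd b := by
  induction k with
  | zero => simp
  | succ k ih =>
    have := g_slope hfin b k
    push_cast
    linarith

lemma dd_nonneg (hfin : ∀ t : S, G t ≠ ⊤) (b : Bool) : 0 ≤ dd b := by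
  by_contra hd
  push_neg at hd
  obtain ⟨k, hk⟩ := exists_nat_gt (g b 0 / (-(dd b)))
  have h1 : g b 0 < (k:ℝ) * (-(dd b)) := (div_lt_iff₀ (by linarith)).mp hk
  have h2 := g_lin hfin b k
  have h3 := g_nonneg b k
  nlinarith

lemma cross_ne_top (hfin : ∀ t : S, G t ≠ ⊤) (b : Bool) :
    (∑' j, (1/2 : ℝ≥0∞)^(j+2) * G (!b, j)) ≠ ⊤ := by
  intro htop
  apply hfin (b,0)
  rw [G_gate b, htop]
  simp

lemma cross_toReal (hfin : ∀ t : S, G t ≠ ⊤) (b : Bool) :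
    (∑' j, (1/2 : ℝ≥0∞)^(j+2) * G (!b, j)).toReal = ∑' j, (1/2:ℝ)^(j+2) * g (!b) j := by
  rw [ENNReal.tsum_toReal_eq
    (fun j => ENNReal.mul_ne_top (ENNReal.pow_ne_top half_ne_top) (hfin _))]
  refine tsum_congr fun j => ?_
  rw [ENNReal.toReal_mul, ENNReal.toReal_pow]
  norm_num [g]

lemma cross_eval (hfin : ∀ t : S, G t ≠ ⊤) (c : Bool) :
    ∑' j : ℕ, (1/2:ℝ)^(j+2) * g c j = 1/2 * g c 0 + 1/2 * dd c := by
  have hgeom : Summable (fun j : ℕ => (1/2:ℝ)^j) :=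
    summable_geometric_of_lt_one (by norm_num) (by norm_num)
  have hjg : Summable (fun j : ℕ => (j:ℝ) * (1/2)^j) := by
    simpa using summable_pow_mul_geometric_of_norm_lt_one 1 (r := (1/2:ℝ))
      (by rw [Real.norm_eq_abs]; rw [abs_of_pos] <;> norm_num)
  have hptw : ∀ j : ℕ, (1/2:ℝ)^(j+2) * g c j
      = (1/4 * g c 0) * (1/2)^j + (1/4 * dd c) * ((j:ℝ) * (1/2)^j) := by
    intro j
    rw [g_lin hfin c j]
    ring
  rw [tsum_congr hptw, Summable.tsum_add (hgeom.mul_left _) (hjg.mul_left _), tsum_mul_left,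
    tsum_mul_left, tsum_geometric_of_lt_one (by norm_num) (by norm_num),
    tsum_coe_mul_geometric_of_norm_lt_one (r := (1/2:ℝ)) (by rw [Real.norm_eq_abs]; rw [abs_of_pos] <;> norm_num)]
  norm_num
  ring

lemma g_gate_true (hfin : ∀ t : S, G t ≠ ⊤) :
    g true 0 = 1/2 * g true 1 + (1/2 * g false 0 + 1/2 * dd false) := by
  have h1 : G (true,0) = 1/2 * G (true,1) + ∑' j, (1/2 : ℝ≥0∞)^(j+2) * G (!true, j) := by
    have := G_gate true
    simpa using this
  have hx : (1/2 : ℝ≥0∞) * G (true,1) ≠ ⊤ := ENNReal.mul_ne_top half_ne_top (hfin _)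
  have hT := cross_ne_top hfin true
  calc g true 0 = (G (true,0)).toReal := rfl
    _ = ((1/2 : ℝ≥0∞) * G (true,1)).toReal
        + (∑' j, (1/2 : ℝ≥0∞)^(j+2) * G (!true, j)).toReal := by
        rw [h1, ENNReal.toReal_add hx hT]
    _ = 1/2 * g true 1 + (1/2 * g false 0 + 1/2 * dd false) := by
        rw [ENNReal.toReal_mul, cross_toReal hfin true]
        simp only [Bool.not_true]
        rw [cross_eval hfin false]
        norm_num [g]

lemma g_gate_false (hfin : ∀ t : S, G t ≠ ⊤) :
    g false 0 = 1 + (1/2 * g false 1 + (1/2 * g true 0 + 1/2 * dd true)) := by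
  have h1 : G (false,0) = 1 + (1/2 * G (false,1)
      + ∑' j, (1/2 : ℝ≥0∞)^(j+2) * G (!false, j)) := by
    have := G_gate false
    simpa [add_assoc] using this
  have hx : (1/2 : ℝ≥0∞) * G (false,1) ≠ ⊤ := ENNReal.mul_ne_top half_ne_top (hfin _)
  have hT := cross_ne_top hfin false
  have hxT : (1/2 : ℝ≥0∞) * G (false,1)
      + ∑' j, (1/2 : ℝ≥0∞)^(j+2) * G (!false, j) ≠ ⊤ := ENNReal.add_ne_top.mpr ⟨hx, hT⟩
  calc g false 0 = (G (false,0)).toReal := rfl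
    _ = (1 : ℝ≥0∞).toReal + ((1/2 : ℝ≥0∞) * G (false,1)
        + ∑' j, (1/2 : ℝ≥0∞)^(j+2) * G (!false, j)).toReal := by
        rw [h1, ENNReal.toReal_add ENNReal.one_ne_top hxT]
    _ = 1 + (1/2 * g false 1 + (1/2 * g true 0 + 1/2 * dd true)) := by
        rw [ENNReal.toReal_add hx hT, ENNReal.toReal_mul, cross_toReal hfin false]
        simp only [Bool.not_false]
        rw [cross_eval hfin true]
        norm_num [g]

lemma recurrent_s0 : ∑' n, nstep qH (n+1) s0 s0 = ⊤ := by
  by_contra h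
  have hfin := G_ne_top h
  have e1 := g_gate_true hfin
  have e2 := g_gate_false hfin
  have ht1 : g true 1 = g true 0 + dd true := by unfold dd; ring
  have hf1 : g false 1 = g false 0 + dd false := by unfold dd; ring
  have d1 := dd_nonneg hfin true
  have d2 := dd_nonneg hfin false
  rw [ht1] at e1
  rw [hf1] at e2
  linarith

lemma recurrent_all (s : S) : ∑' n, nstep qH (n+1) s s = ⊤ := by
  obtain ⟨a, ha1, hapos⟩ := irred s s0
  obtain ⟨b, _, hbpos⟩ := irred s0 s
  have hG : ∑' n, nstep qH n s0 s0 = ⊤ := by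
    have hle : (∑' n, nstep qH (n+1) s0 s0) ≤ ∑' n, nstep qH n s0 s0 :=
      ENNReal.tsum_comp_le_tsum_of_injective (f := fun n : ℕ => n + 1)
        (add_left_injective 1) _
    rw [recurrent_s0] at hle
    exact top_le_iff.mp hle
  have step : ∀ n : ℕ, nstep qH a s s0 * nstep qH n s0 s0 * nstep qH b s0 s
      ≤ nstep qH (a + n + b) s s := by
    intro n
    have h1 : nstep qH (a+n) s s0 * nstep qH b s0 s ≤ nstep qH (a + n + b) s s := by
      rw [nstep_add' qH (a+n) b s s]
      exact ENNReal.le_tsum s0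
    have h2 : nstep qH a s s0 * nstep qH n s0 s0 ≤ nstep qH (a+n) s s0 := by
      rw [nstep_add' qH a n s s0]
      exact ENNReal.le_tsum s0
    exact le_trans (mul_le_mul_left h2 _) h1
  obtain ⟨a', rfl⟩ : ∃ a', a = a' + 1 := ⟨a - 1, by omega⟩
  have hinj : Function.Injective (fun n : ℕ => a' + n + b) := fun x y h => by
    simp only at h; omega
  have hchain : (⊤ : ℝ≥0∞) ≤ ∑' n, nstep qH (n+1) s s := by
    calc (⊤ : ℝ≥0∞) = nstep qH (a'+1) s s0 * (∑' n, nstep qH n s0 s0) * nstep qH b s0 s := by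
          rw [hG, ENNReal.mul_top hapos.ne', ENNReal.top_mul hbpos.ne']
      _ = ∑' n, nstep qH (a'+1) s s0 * nstep qH n s0 s0 * nstep qH b s0 s := by
          rw [ENNReal.tsum_mul_right, ENNReal.tsum_mul_left]
      _ ≤ ∑' n, nstep qH ((a'+1) + n + b) s s := Summable.tsum_le_tsum (fun n => step n)
            ENNReal.summable ENNReal.summable
      _ = ∑' n, nstep qH ((a' + n + b) + 1) s s := tsum_congr fun n => by
            congr 1
            omega
      _ ≤ ∑' n, nstep qH (n+1) s s :=
          ENNReal.tsum_comp_le_tsum_of_injective hinj (fun m => nstep qH (m+1) s s)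
  exact top_le_iff.mp hchain


/-- The transition matrix `Q` of the Hata map with `p = 1/2` is irreducible and recurrent:
for all states `s,t` there is `n ≥ 1` with `q^{(n)}(s,t) > 0`, and
`∑_{n≥1} q^{(n)}(s,s) = ∞` for every state `s`. -/
theorem hata_chain_irreducible_recurrent :
    (∀ s t : S, ∃ n : ℕ, 1 ≤ n ∧ 0 < nstep qH n s t)
    ∧ (∀ s : S, ∑' n : ℕ, nstep qH (n+1) s s = ⊤) :=
  ⟨irred, recurrent_all⟩

end
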